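/- Let I₁ and I₂ be independent inverse-gamma random variables with shapes a₁, a₂ > 0 and common scale parameter such that the product scale is γ̄. Then the product I = I₁·I₂ has PDF f(y) = (2 γ̄^{(a₁+a₂)/2} / (Γ(a₁)Γ(a₂))) · y^{-(a₁+a₂)/2 − 1} · K_{a₂−a₁}(2 (γ̄/y)^{1/2}) for y > 0, where K_ν is the modified Bessel function of the second kind. -/

import Mathlib

open MeasureTheory ProbabilityTheory Real Set
open scoped ENNReal

noncomputable def igPdf (a s : ℝ) (y : ℝ) : ℝ :=
  if 0 < y then s ^ a / (Real.Gamma a * y ^ (a + 1)) * Real.exp (-s / y) else 0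

noncomputable def besselK (ν z : ℝ) : ℝ :=
  ∫ t in Set.Ioi (0 : ℝ), Real.exp (-z * Real.cosh t) * Real.cosh (ν * t)

lemma cosh_le_exp_abs (y : ℝ) : Real.cosh y ≤ Real.exp |y| := by
  rw [Real.cosh_eq]
  have h1 : Real.exp y ≤ Real.exp |y| := Real.exp_le_exp.2 (le_abs_self y)
  have h2 : Real.exp (-y) ≤ Real.exp |y| := Real.exp_le_exp.2 (neg_le_abs y)
  linarith

lemma sq_div_eight_le_cosh {t : ℝ} (ht : 0 ≤ t) : t^2/8 ≤ Real.cosh t := by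
  have h1 : (1 + t/2)^2 ≤ Real.exp t := by
    have h0 : (1 + t/2) ≤ Real.exp (t/2) := by
      have := Real.add_one_le_exp (t/2); linarith
    calc (1 + t/2)^2 ≤ Real.exp (t/2)^2 := by
          apply pow_le_pow_left₀ (by linarith) h0
      _ = Real.exp t := by rw [sq, ← Real.exp_add]; norm_num
  have h2 : Real.exp t ≤ 2 * Real.cosh t := by
    rw [Real.cosh_eq]; have := (Real.exp_pos (-t)).le; linarith
  nlinarith [sq_nonneg t, sq_nonneg (1+t/2)]

lemma gauss_translate_integrable (a b : ℝ) (hb : 0 < b) :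
    Integrable (fun t : ℝ => Real.exp (a * t - b * t^2)) := by
  have key : (fun t : ℝ => Real.exp (a * t - b * t^2)) =
      fun t : ℝ => Real.exp (a^2/(4*b)) * Real.exp (-b * (t + (-(a/(2*b))))^2) := by
    funext t
    rw [← Real.exp_add]
    congr 1
    field_simp
    ring
  rw [key]
  apply Integrable.const_mul
  have := (integrable_exp_neg_mul_sq hb)
  exact (measurePreserving_add_right volume (-(a/(2*b)))).integrable_comp
    this.aestronglyMeasurable |>.2 this
lemma besselK_integrand_integrableOn (ν z : ℝ) (hz : 0 < z) :
    IntegrableOn (fun t => Real.exp (-z * Real.cosh t) * Real.cosh (ν * t)) (Ioi (0:ℝ)) := by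
  have hmaj : Integrable (fun t : ℝ => Real.exp (|ν| * t - z/8 * t^2)) :=
    gauss_translate_integrable _ _ (by linarith)
  apply Integrable.mono' (hmaj.restrict (s := Ioi 0))
  · exact ((Real.continuous_exp.comp (continuous_const.mul Real.continuous_cosh)).mul
      (Real.continuous_cosh.comp (continuous_const.mul continuous_id))).aestronglyMeasurable
  · filter_upwards [ae_restrict_mem measurableSet_Ioi] with t ht
    have ht0 : 0 ≤ t := (le_of_lt ht)
    have e1 : Real.exp (-z * Real.cosh t) ≤ Real.exp (-(z/8) * t^2) := by
      apply Real.exp_le_exp.2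
      have := sq_div_eight_le_cosh ht0
      nlinarith
    have e2 : Real.cosh (ν * t) ≤ Real.exp (|ν| * t) := by
      calc Real.cosh (ν * t) ≤ Real.exp |ν * t| := cosh_le_exp_abs _
        _ = Real.exp (|ν| * t) := by rw [abs_mul, abs_of_nonneg ht0]
    rw [Real.norm_eq_abs, abs_of_nonneg (by positivity)]
    calc Real.exp (-z * Real.cosh t) * Real.cosh (ν * t)
        ≤ Real.exp (-(z/8) * t^2) * Real.exp (|ν| * t) :=
          mul_le_mul e1 e2 (Real.cosh_pos _).le (Real.exp_pos _).le
      _ = Real.exp (|ν| * t - z/8 * t^2) := by rw [← Real.exp_add]; ring_nf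

lemma lintegral_exp_cosh (ν z : ℝ) (hz : 0 < z) :
    ∫⁻ t : ℝ, ENNReal.ofReal (Real.exp (ν * t) * Real.exp (-z * Real.cosh t)) =
    ENNReal.ofReal (2 * besselK ν z) := by
  set F : ℝ → ℝ≥0∞ := fun t => ENNReal.ofReal (Real.exp (ν * t) * Real.exp (-z * Real.cosh t))
    with hF
  have hrefl : ∫⁻ t in Iic (0:ℝ), F t = ∫⁻ t in Ioi (0:ℝ), F (-t) := by
    have h1 : ∫⁻ t in Iic (0:ℝ), F t
        = ∫⁻ t in Iic (0:ℝ), F t ∂(Measure.map Neg.neg volume) := by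
      rw [Measure.map_neg_eq_self]
    rw [h1, setLIntegral_map measurableSet_Iic (by fun_prop) measurable_neg]
    have h2 : Neg.neg ⁻¹' (Iic (0:ℝ)) = Ici 0 := by ext x; simp
    rw [h2, ← setLIntegral_congr (Ioi_ae_eq_Ici (a := (0:ℝ)))]
  have hsplit : ∫⁻ t : ℝ, F t = ∫⁻ t in Ioi (0:ℝ), (F t + F (-t)) := by
    rw [← lintegral_add_compl F (measurableSet_Ioi (a := (0:ℝ))), compl_Ioi, hrefl,
      lintegral_add_left (by fun_prop)]
  rw [hsplit]
  have hptw : ∀ t : ℝ, F t + F (-t)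
      = ENNReal.ofReal (2 * (Real.exp (-z * Real.cosh t) * Real.cosh (ν * t))) := by
    intro t
    rw [hF]
    simp only [Real.cosh_neg, mul_neg]
    rw [← ENNReal.ofReal_add (by positivity) (by positivity)]
    congr 1
    rw [Real.cosh_eq (ν*t), Real.exp_neg (ν*t)]
    have h3 := Real.exp_ne_zero (ν*t)
    field_simp
  have hint := (besselK_integrand_integrableOn ν z hz).const_mul 2
  calc ∫⁻ t in Ioi (0:ℝ), (F t + F (-t))
      = ∫⁻ t in Ioi (0:ℝ), ENNReal.ofReal
          ((fun t => 2 * (Real.exp (-z * Real.cosh t) * Real.cosh (ν * t))) t) := by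
        exact lintegral_congr fun t => hptw t
    _ = ENNReal.ofReal (∫ t in Ioi (0:ℝ), 2 * (Real.exp (-z * Real.cosh t) * Real.cosh (ν * t))) := by
        rw [← ofReal_integral_eq_lintegral_ofReal (by simpa [mul_assoc] using hint)]
        filter_upwards with t
        positivity
    _ = ENNReal.ofReal (2 * besselK ν z) := by
        rw [integral_const_mul, besselK]

lemma DIG_pointwise (a₁ a₂ s₁ s₂ u t : ℝ) (ha₁ : 0 < a₁) (ha₂ : 0 < a₂)
    (hs₁ : 0 < s₁) (hs₂ : 0 < s₂) (hu : 0 < u) :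
    (Real.sqrt (s₁*u/s₂) * Real.exp t) *
      (igPdf a₁ s₁ (Real.sqrt (s₁*u/s₂) * Real.exp t) *
        ((Real.sqrt (s₁*u/s₂) * Real.exp t)⁻¹ *
          igPdf a₂ s₂ (u / (Real.sqrt (s₁*u/s₂) * Real.exp t)))) =
    ((s₁*s₂) ^ ((a₁+a₂)/2) / (Real.Gamma a₁ * Real.Gamma a₂) * u ^ (-(a₁+a₂)/2 - 1)) *
      (Real.exp ((a₂-a₁)*t) * Real.exp (-(2 * Real.sqrt (s₁*s₂/u)) * Real.cosh t)) := by
  have hc : 0 < Real.sqrt (s₁*u/s₂) := Real.sqrt_pos.2 (by positivity)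
  have hq : 0 < Real.sqrt (s₁*s₂/u) := Real.sqrt_pos.2 (by positivity)
  have hx : 0 < Real.sqrt (s₁*u/s₂) * Real.exp t := by positivity
  have hux : 0 < u / (Real.sqrt (s₁*u/s₂) * Real.exp t) := by positivity
  have hqc : Real.sqrt (s₁*s₂/u) * Real.sqrt (s₁*u/s₂) = s₁ := by
    rw [← Real.sqrt_mul (by positivity) _,
      show s₁*s₂/u * (s₁*u/s₂) = s₁^2 by field_simp, Real.sqrt_sq hs₁.le]
  have hq2 : Real.sqrt (s₁*s₂/u) = s₂ / u * Real.sqrt (s₁*u/s₂) := by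
    rw [show s₁*s₂/u = (s₂/u)^2 * (s₁*u/s₂) by field_simp,
      Real.sqrt_mul (by positivity), Real.sqrt_sq (by positivity)]
  have key1 : ∀ B A e : ℝ, A ≠ 0 → e ≠ 0 → B * A = s₁ → -s₁/(A*e) = -(B * e⁻¹) := by
    intro B A e hA he h
    rw [← h]; field_simp
  have key2 : ∀ B A e : ℝ, u ≠ 0 → B = s₂/u * A → -s₂/(u/(A*e)) = -(B*e) := by
    intro B A e hu' h
    rw [div_div_eq_mul_div, h, mul_assoc]; field_simp
  have h1 : -s₁ / (Real.sqrt (s₁*u/s₂) * Real.exp t)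
      = -(Real.sqrt (s₁*s₂/u) * Real.exp (-t)) := by
    rw [Real.exp_neg]; exact key1 _ _ _ hc.ne' (Real.exp_ne_zero t) hqc
  have h2 : -s₂ / (u / (Real.sqrt (s₁*u/s₂) * Real.exp t))
      = -(Real.sqrt (s₁*s₂/u) * Real.exp t) :=
    key2 _ _ _ hu.ne' hq2
  have hΓ₁ : (0:ℝ) < Real.Gamma a₁ := Real.Gamma_pos_of_pos ha₁
  have hΓ₂ : (0:ℝ) < Real.Gamma a₂ := Real.Gamma_pos_of_pos ha₂
  have hp1 : (0:ℝ) < (Real.sqrt (s₁*u/s₂) * Real.exp t) ^ (a₁+1) := Real.rpow_pos_of_pos hx _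
  have hp2 : (0:ℝ) < (u / (Real.sqrt (s₁*u/s₂) * Real.exp t)) ^ (a₂+1) :=
    Real.rpow_pos_of_pos hux _
  have hnn1 : (0:ℝ) ≤ s₁*u/s₂ := by positivity
  have hnn2 : (0:ℝ) ≤ s₁*s₂/u := by positivity
  rw [igPdf, if_pos hx, igPdf, if_pos hux, h1, h2]
  have hL : 0 < (Real.sqrt (s₁*u/s₂) * Real.exp t) *
      (s₁ ^ a₁ / (Real.Gamma a₁ * (Real.sqrt (s₁*u/s₂) * Real.exp t) ^ (a₁ + 1)) *
          Real.exp (-(Real.sqrt (s₁*s₂/u) * Real.exp (-t))) *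
        ((Real.sqrt (s₁*u/s₂) * Real.exp t)⁻¹ *
          (s₂ ^ a₂ / (Real.Gamma a₂ * (u / (Real.sqrt (s₁*u/s₂) * Real.exp t)) ^ (a₂ + 1)) *
            Real.exp (-(Real.sqrt (s₁*s₂/u) * Real.exp t))))) := by positivity
  have hR : 0 < ((s₁*s₂) ^ ((a₁+a₂)/2) / (Real.Gamma a₁ * Real.Gamma a₂) *
        u ^ (-(a₁+a₂)/2 - 1)) *
      (Real.exp ((a₂-a₁)*t) * Real.exp (-(2 * Real.sqrt (s₁*s₂/u)) * Real.cosh t)) := by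
    positivity
  rw [← Real.exp_log hL, ← Real.exp_log hR]
  congr 1
  simp only [Real.log_mul, Real.log_div, Real.log_inv, Real.log_exp,
    Real.log_rpow hx, Real.log_rpow hux, Real.log_rpow hs₁, Real.log_rpow hs₂,
    Real.log_rpow hu, Real.log_rpow (mul_pos hs₁ hs₂), Real.log_sqrt hnn1, Real.log_sqrt hnn2,
    Real.cosh_eq, ne_eq, hΓ₁.ne', hΓ₂.ne', hp1.ne', hp2.ne', hs₁.ne', hs₂.ne',
    hu.ne', hx.ne', hux.ne', hc.ne', hq.ne', Real.exp_ne_zero, not_false_iff, mul_eq_zero,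
    div_eq_zero_iff, inv_eq_zero, or_self, or_false, false_or,
    (Real.rpow_pos_of_pos hs₁ a₁).ne', (Real.rpow_pos_of_pos hs₂ a₂).ne',
    (Real.rpow_pos_of_pos (mul_pos hs₁ hs₂) ((a₁+a₂)/2)).ne',
    (Real.rpow_pos_of_pos hu (-(a₁+a₂)/2-1)).ne']
  ring

lemma lintegral_image_eq' {s : Set ℝ} {f f' : ℝ → ℝ} (hs : MeasurableSet s)
    (hf' : ∀ x ∈ s, HasDerivWithinAt f (f' x) s x) (hinj : InjOn f s) (g : ℝ → ℝ≥0∞) :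
    ∫⁻ x in f '' s, g x = ∫⁻ x in s, ENNReal.ofReal |f' x| * g (f x) := by
  simpa only [ContinuousLinearMap.det_toSpanSingleton] using
    MeasureTheory.lintegral_image_eq_lintegral_abs_det_fderiv_mul volume hs
      (fun x hx => (hf' x hx).hasFDerivWithinAt) hinj g

lemma image_const_mul_exp (c : ℝ) (hc : 0 < c) :
    (fun t => c * Real.exp t) '' univ = Ioi 0 := by
  ext x
  simp only [image_univ, mem_range, mem_Ioi]
  constructor
  · rintro ⟨t, rfl⟩; positivity
  · intro hx
    exact ⟨Real.log (x / c), by rw [Real.exp_log (by positivity)]; field_simp⟩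

lemma DIG_x_integral (a₁ a₂ s₁ s₂ u : ℝ) (ha₁ : 0<a₁) (ha₂ : 0<a₂) (hs₁ : 0<s₁)
    (hs₂ : 0<s₂) (hu : 0<u) :
    ∫⁻ x in Ioi (0:ℝ), ENNReal.ofReal (igPdf a₁ s₁ x * (x⁻¹ * igPdf a₂ s₂ (u/x))) =
    ENNReal.ofReal (2 * (s₁*s₂) ^ ((a₁+a₂)/2) / (Real.Gamma a₁ * Real.Gamma a₂) *
      u ^ (-(a₁+a₂)/2-1) * besselK (a₂-a₁) (2 * Real.sqrt (s₁*s₂/u))) := by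
  have hc : 0 < Real.sqrt (s₁*u/s₂) := Real.sqrt_pos.2 (by positivity)
  have hderiv : ∀ t ∈ (univ : Set ℝ),
      HasDerivWithinAt (fun t => Real.sqrt (s₁*u/s₂) * Real.exp t)
        (Real.sqrt (s₁*u/s₂) * Real.exp t) univ t :=
    fun t _ => ((Real.hasDerivAt_exp t).const_mul _).hasDerivWithinAt
  have hinj : InjOn (fun t => Real.sqrt (s₁*u/s₂) * Real.exp t) univ := by
    intro a _ b _ hab
    exact Real.exp_injective (mul_left_cancel₀ hc.ne' hab)
  rw [← image_const_mul_exp _ hc, lintegral_image_eq' MeasurableSet.univ hderiv hinj,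
    Measure.restrict_univ]
  have hpt : ∀ t : ℝ, ENNReal.ofReal |Real.sqrt (s₁*u/s₂) * Real.exp t| *
      ENNReal.ofReal (igPdf a₁ s₁ (Real.sqrt (s₁*u/s₂) * Real.exp t) *
        ((Real.sqrt (s₁*u/s₂) * Real.exp t)⁻¹ *
          igPdf a₂ s₂ (u/(Real.sqrt (s₁*u/s₂) * Real.exp t)))) =
      ENNReal.ofReal ((s₁*s₂) ^ ((a₁+a₂)/2) / (Real.Gamma a₁ * Real.Gamma a₂) *
        u ^ (-(a₁+a₂)/2 - 1)) *
      ENNReal.ofReal (Real.exp ((a₂-a₁)*t) *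
        Real.exp (-(2 * Real.sqrt (s₁*s₂/u)) * Real.cosh t)) := by
    intro t
    have hx : 0 < Real.sqrt (s₁*u/s₂) * Real.exp t := by positivity
    rw [abs_of_pos hx, ← ENNReal.ofReal_mul hx.le,
      DIG_pointwise a₁ a₂ s₁ s₂ u t ha₁ ha₂ hs₁ hs₂ hu,
      ENNReal.ofReal_mul (by positivity)]
  simp_rw [hpt]
  rw [lintegral_const_mul' _ _ ENNReal.ofReal_ne_top,
    lintegral_exp_cosh (a₂-a₁) _ (by positivity),
    ← ENNReal.ofReal_mul (by positivity)]
  congr 1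
  ring

lemma igPdf_nonneg {a s : ℝ} (ha : 0 < a) (hs : 0 < s) (y : ℝ) : 0 ≤ igPdf a s y := by
  unfold igPdf
  split
  · have hΓ := Real.Gamma_pos_of_pos ha
    positivity
  · exact le_refl 0

lemma igPdf_of_nonpos {a s y : ℝ} (hy : y ≤ 0) : igPdf a s y = 0 := if_neg (not_lt.2 hy)

lemma measurable_igPdf (a s : ℝ) : Measurable (igPdf a s) := by
  unfold igPdf
  refine Measurable.ite (measurableSet_lt measurable_const measurable_id) (by fun_prop) measurable_const

/-- The product of two independent inverse-gamma random variables with shapes a₁, a₂ > 0 and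
scale product γ̄ has the double-inverse-gamma PDF
`f(y) = 2 γ̄^{(a₁+a₂)/2}/(Γ(a₁)Γ(a₂)) · y^{-(a₁+a₂)/2-1} · K_{a₂−a₁}(2 (γ̄/y)^{1/2})` for y > 0. -/
theorem double_inverse_gamma_pdf {Ω : Type*} [MeasurableSpace Ω] (P : Measure Ω)
    [IsProbabilityMeasure P] (I₁ I₂ : Ω → ℝ) (a₁ a₂ s₁ s₂ γbar : ℝ)
    (ha₁ : 0 < a₁) (ha₂ : 0 < a₂) (hs₁ : 0 < s₁) (hs₂ : 0 < s₂) (hγ : γbar = s₁ * s₂)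
    (hm₁ : Measurable I₁) (hm₂ : Measurable I₂)
    [MeasureTheory.HasPDF I₁ P] [MeasureTheory.HasPDF I₂ P]
    (h₁ : MeasureTheory.pdf I₁ P =ᵐ[volume] fun y => ENNReal.ofReal (igPdf a₁ s₁ y))
    (h₂ : MeasureTheory.pdf I₂ P =ᵐ[volume] fun y => ENNReal.ofReal (igPdf a₂ s₂ y))
    (hind : IndepFun I₁ I₂ P) :
    MeasureTheory.pdf (fun ω => I₁ ω * I₂ ω) P =ᵐ[volume] fun y =>
      ENNReal.ofReal (if 0 < y then
        2 * γbar ^ ((a₁ + a₂) / 2) / (Real.Gamma a₁ * Real.Gamma a₂) *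
          y ^ (-(a₁ + a₂) / 2 - 1) *
          besselK (a₂ - a₁) (2 * (γbar / y) ^ ((1 : ℝ) / 2))
      else 0) := by
  subst hγ
  set f₁ : ℝ → ℝ≥0∞ := fun y => ENNReal.ofReal (igPdf a₁ s₁ y) with hf₁
  set f₂ : ℝ → ℝ≥0∞ := fun y => ENNReal.ofReal (igPdf a₂ s₂ y) with hf₂
  have hmf₁ : Measurable f₁ := (measurable_igPdf _ _).ennreal_ofReal
  have hmf₂ : Measurable f₂ := (measurable_igPdf _ _).ennreal_ofReal
  have hf₁top : ∀ x, f₁ x ≠ ⊤ := fun x => ENNReal.ofReal_ne_top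
  have μ₁def : Measure.map I₁ P = volume.withDensity f₁ := by
    rw [MeasureTheory.map_eq_withDensity_pdf I₁ P volume]
    exact withDensity_congr_ae h₁
  have μ₂def : Measure.map I₂ P = volume.withDensity f₂ := by
    rw [MeasureTheory.map_eq_withDensity_pdf I₂ P volume]
    exact withDensity_congr_ae h₂
  -- the candidate density
  set J : ℝ → ℝ≥0∞ :=
    fun u => ∫⁻ x in Ioi (0:ℝ), f₁ x * (ENNReal.ofReal x⁻¹ * f₂ (u/x)) with hJdef
  have hJu : ∀ u, J u = ∫⁻ x in Ioi (0:ℝ), f₁ x * (ENNReal.ofReal x⁻¹ * f₂ (u/x)) :=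
    fun u => rfl
  have hmJ : Measurable J := by
    apply Measurable.lintegral_prod_right
    exact (hmf₁.comp measurable_snd).mul
      ((measurable_snd.inv.ennreal_ofReal).mul
        (hmf₂.comp (measurable_fst.div measurable_snd)))
  have hJG : J = fun y => ENNReal.ofReal (if 0 < y then
      2 * (s₁*s₂) ^ ((a₁ + a₂) / 2) / (Real.Gamma a₁ * Real.Gamma a₂) *
        y ^ (-(a₁ + a₂) / 2 - 1) *
        besselK (a₂ - a₁) (2 * ((s₁*s₂) / y) ^ ((1 : ℝ) / 2))
      else 0) := by
    funext u
    rw [hJu u]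
    rcases le_or_gt u 0 with hu | hu
    · simp only [if_neg (not_lt.2 hu), ENNReal.ofReal_zero]
      rw [← lintegral_zero (μ := volume.restrict (Ioi (0:ℝ)))]
      apply setLIntegral_congr_fun measurableSet_Ioi
      intro x hx
      have hz : igPdf a₂ s₂ (u/x) = 0 :=
        igPdf_of_nonpos (div_nonpos_iff.2 (Or.inr ⟨hu, (mem_Ioi.1 hx).le⟩))
      simp only [hf₂, hz, ENNReal.ofReal_zero, mul_zero]
    · rw [if_pos hu]
      have hcong : ∀ x ∈ Ioi (0:ℝ), f₁ x * (ENNReal.ofReal x⁻¹ * f₂ (u/x)) =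
          ENNReal.ofReal (igPdf a₁ s₁ x * (x⁻¹ * igPdf a₂ s₂ (u/x))) := by
        intro x hx
        have hx' : (0:ℝ) < x := hx
        simp only [hf₁, hf₂]
        rw [← ENNReal.ofReal_mul (inv_nonneg.2 hx'.le),
          ← ENNReal.ofReal_mul (igPdf_nonneg ha₁ hs₁ x)]
      rw [setLIntegral_congr_fun measurableSet_Ioi hcong,
        DIG_x_integral a₁ a₂ s₁ s₂ u ha₁ ha₂ hs₁ hs₂ hu, ← Real.sqrt_eq_rpow]
  -- the law of the product
  have hprod : Measure.map (fun ω => (I₁ ω, I₂ ω)) P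
      = (volume.withDensity f₁).prod (volume.withDensity f₂) := by
    rw [← μ₁def, ← μ₂def]
    exact (indepFun_iff_map_prod_eq_prod_map_map hm₁.aemeasurable hm₂.aemeasurable).mp hind
  haveI hP₁ : IsProbabilityMeasure (volume.withDensity f₁) := by
    rw [← μ₁def]; exact Measure.isProbabilityMeasure_map hm₁.aemeasurable
  haveI hP₂ : IsProbabilityMeasure (volume.withDensity f₂) := by
    rw [← μ₂def]; exact Measure.isProbabilityMeasure_map hm₂.aemeasurable
  have hmapmul : Measure.map (fun ω => I₁ ω * I₂ ω) P = volume.withDensity J := by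
    ext s hs
    have hmul : Measurable fun p : ℝ × ℝ => p.1 * p.2 := measurable_fst.mul measurable_snd
    have hInd : Measurable (s.indicator (1 : ℝ → ℝ≥0∞)) := measurable_one.indicator hs
    have hIndTop : ∀ u : ℝ, s.indicator (1 : ℝ → ℝ≥0∞) u ≠ ⊤ := by
      intro u
      by_cases hu : u ∈ s <;> simp [Set.indicator_apply, hu]
    rw [show (fun ω => I₁ ω * I₂ ω) = (fun p : ℝ × ℝ => p.1 * p.2) ∘ (fun ω => (I₁ ω, I₂ ω))
        from rfl, ← Measure.map_map hmul (hm₁.prodMk hm₂), hprod,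
      Measure.map_apply hmul hs, Measure.prod_apply (hmul hs)]
    -- inner integral over y
    have inner_eq : ∀ x : ℝ,
        (volume.withDensity f₂) (Prod.mk x ⁻¹' ((fun p : ℝ × ℝ => p.1 * p.2) ⁻¹' s))
        = ∫⁻ y, f₂ y * s.indicator 1 (x * y) := by
      intro x
      have hA : MeasurableSet {y : ℝ | x * y ∈ s} := (measurable_const_mul x) hs
      rw [show Prod.mk x ⁻¹' ((fun p : ℝ × ℝ => p.1 * p.2) ⁻¹' s) = {y : ℝ | x * y ∈ s}
          from rfl, withDensity_apply _ hA, ← lintegral_indicator hA]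
      congr 1
      funext y
      by_cases hy : x * y ∈ s <;>
        simp [Set.indicator_apply, hy, Set.mem_setOf_eq]
    simp_rw [inner_eq]
    -- outer integral with density f₁
    have hmInner : Measurable fun x : ℝ => ∫⁻ y, f₂ y * s.indicator 1 (x * y) := by
      apply Measurable.lintegral_prod_right
      exact (hmf₂.comp measurable_snd).mul
        (hInd.comp (measurable_fst.mul measurable_snd))
    rw [lintegral_withDensity_eq_lintegral_mul volume hmf₁ hmInner]
    simp only [Pi.mul_apply]
    -- restrict to positive x
    have hrestrict : ∫⁻ x, f₁ x * ∫⁻ y, f₂ y * s.indicator 1 (x * y)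
        = ∫⁻ x in Ioi (0:ℝ), f₁ x * ∫⁻ y, f₂ y * s.indicator 1 (x * y) := by
      rw [← lintegral_indicator measurableSet_Ioi]
      congr 1
      funext x
      by_cases hx : x ∈ Ioi (0:ℝ)
      · simp only [Set.indicator_apply, if_pos hx]
      · have hzero : igPdf a₁ s₁ x = 0 := igPdf_of_nonpos (le_of_not_gt hx)
        simp only [Set.indicator_apply, if_neg hx, hf₁, hzero, ENNReal.ofReal_zero, zero_mul]
    rw [hrestrict]
    -- substitute y = u / x in the inner integral
    have hsub : ∀ x ∈ Ioi (0:ℝ), f₁ x * (∫⁻ y, f₂ y * s.indicator 1 (x * y))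
        = ∫⁻ u, (f₁ x * ENNReal.ofReal x⁻¹) * (f₂ (u/x) * s.indicator 1 u) := by
      intro x hx
      have hx' : (0:ℝ) < x := hx
      have hH : Measurable fun u : ℝ => f₂ (u/x) * s.indicator 1 u :=
        (hmf₂.comp (measurable_id.div_const x)).mul hInd
      have hcomp : (fun y : ℝ => f₂ y * s.indicator 1 (x * y))
          = fun y : ℝ => (fun u : ℝ => f₂ (u/x) * s.indicator 1 u) (x * y) := by
        funext y
        simp only [mul_div_cancel_left₀ y hx'.ne']
      rw [hcomp, ← lintegral_map hH (measurable_const_mul x),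
        Real.map_volume_mul_left hx'.ne', lintegral_smul_measure, smul_eq_mul,
        abs_of_pos (inv_pos.2 hx'), ← mul_assoc,
        ← lintegral_const_mul' _ _ (ENNReal.mul_ne_top (hf₁top x) ENNReal.ofReal_ne_top)]
    rw [setLIntegral_congr_fun measurableSet_Ioi hsub]
    -- swap the two integrals
    have hmSwap : Measurable (Function.uncurry fun (x u : ℝ) =>
        (f₁ x * ENNReal.ofReal x⁻¹) * (f₂ (u/x) * s.indicator 1 u)) :=
      ((hmf₁.comp measurable_fst).mul (measurable_fst.inv.ennreal_ofReal)).mul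
        ((hmf₂.comp (measurable_snd.div measurable_fst)).mul (hInd.comp measurable_snd))
    rw [lintegral_lintegral_swap hmSwap.aemeasurable]
    -- finish: identify with withDensity J
    have hfin : ∀ u : ℝ, (∫⁻ x in Ioi (0:ℝ),
        (f₁ x * ENNReal.ofReal x⁻¹) * (f₂ (u/x) * s.indicator 1 u))
        = J u * s.indicator 1 u := by
      intro u
      rw [hJu u, ← lintegral_mul_const' _ _ (hIndTop u)]
      congr 1
      funext x
      ring
    simp_rw [hfin]
    rw [withDensity_apply _ hs, ← lintegral_indicator hs]
    congr 1
    funext u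
    by_cases hu : u ∈ s <;> simp [Set.indicator_apply, hu]
  haveI : HasPDF (fun ω => I₁ ω * I₂ ω) P volume :=
    hasPDF_of_map_eq_withDensity (hm₁.mul hm₂).aemeasurable J hmJ.aemeasurable hmapmul
  rw [hJG] at hmapmul
  exact (MeasureTheory.pdf.eq_of_map_eq_withDensity' _
    ((hJG ▸ hmJ).aemeasurable)).mp hmapmul
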